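/- Let P, Q, n be integers with P ≥ 1, Q ≥ 6, gcd(P,Q) = 1 and n ≥ 1, and suppose p := Qn + P is prime. Define C_n := (144Q)^{−n}·∏_{k=0}^{n−1} (12Qk + Q + 6P)(12Qk + 5Q + 6P) / ((Qk + Q + P)(k+1)) ∈ ℚ. Then the p-adic valuation of C_n equals −1. -/

import Mathlib

theorem padicValRat_finset_prod' {p : ℕ} [hp : Fact p.Prime] {ι : Type*} (s : Finset ι)
    (f : ι → ℚ) (hf : ∀ i ∈ s, f i ≠ 0) :
    padicValRat p (∏ i ∈ s, f i) = ∑ i ∈ s, padicValRat p (f i) := by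
  classical
  induction s using Finset.induction_on with
  | empty => simp
  | insert a s hnot ih =>
    rw [Finset.prod_insert hnot, Finset.sum_insert hnot,
      padicValRat.mul (hf a (Finset.mem_insert_self a s))
        (Finset.prod_ne_zero_iff.2 fun i hi => hf i (Finset.mem_insert_of_mem hi)),
      ih fun i hi => hf i (Finset.mem_insert_of_mem hi)]

theorem padicValRat_int_eq_zero {p : ℕ} [Fact p.Prime] {z : ℤ} (h : ¬(p : ℤ) ∣ z) :
    padicValRat p (z : ℚ) = 0 := by
  rw [padicValRat.of_int, padicValInt.eq_zero_of_not_dvd h]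
  simp

/-- If `P ≥ 1`, `Q ≥ 6`, `gcd(P,Q) = 1`, `n ≥ 1` and `p := Qn + P` is prime, then the `p`-adic
valuation of `C_n = (144Q)^{−n} ∏_{k=0}^{n−1} (12Qk+Q+6P)(12Qk+5Q+6P)/((Qk+Q+P)(k+1))`
is exactly `−1`. -/
theorem padicValRat_Cn_eq_neg_one (P Q : ℤ) (n : ℕ) (hP : 1 ≤ P) (hQ : 6 ≤ Q)
    (hPQ : Int.gcd P Q = 1) (hn : 1 ≤ n)
    (p : ℕ) (hp : p.Prime) (hpeq : (p : ℤ) = Q * (n : ℤ) + P) :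
    padicValRat p
        (((144 * (Q : ℚ))⁻¹) ^ n *
          ∏ k ∈ Finset.range n,
            ((12 * (Q : ℚ) * (k : ℚ) + (Q : ℚ) + 6 * (P : ℚ)) *
                (12 * (Q : ℚ) * (k : ℚ) + 5 * (Q : ℚ) + 6 * (P : ℚ))) /
              (((Q : ℚ) * (k : ℚ) + (Q : ℚ) + (P : ℚ)) * ((k : ℚ) + 1))) = -1 := by
  haveI : Fact p.Prime := ⟨hp⟩
  have hpZ : Prime (p : ℤ) := Nat.prime_iff_prime_int.mp hp
  have hnZ : (1 : ℤ) ≤ (n : ℤ) := by exact_mod_cast hn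
  have hp6 : 6 * (n : ℤ) + 1 ≤ (p : ℤ) := by rw [hpeq]; nlinarith
  have hp7 : (7 : ℤ) ≤ (p : ℤ) := by omega
  have hpQ : ¬ (p : ℤ) ∣ Q := by
    intro hdQ
    have hdP : (p : ℤ) ∣ P := by
      have : P = (p : ℤ) - Q * n := by omega
      rw [this]
      exact dvd_sub dvd_rfl (hdQ.mul_right n)
    have : (p : ℤ) ∣ (Int.gcd P Q : ℤ) := Int.dvd_coe_gcd hdP hdQ
    rw [hPQ] at this
    have := Int.le_of_dvd one_pos this
    omega
  -- integer factors
  set A : ℕ → ℤ := fun k => 12 * Q * k + Q + 6 * P with hA_def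
  set B : ℕ → ℤ := fun k => 12 * Q * k + 5 * Q + 6 * P with hB_def
  set D : ℕ → ℤ := fun k => Q * k + Q + P with hD_def
  have hApos : ∀ k : ℕ, 0 < A k := by
    intro k
    have : (0:ℤ) ≤ (k:ℤ) := Int.natCast_nonneg k
    simp only [hA_def]; nlinarith
  have hBpos : ∀ k : ℕ, 0 < B k := by
    intro k
    have : (0:ℤ) ≤ (k:ℤ) := Int.natCast_nonneg k
    simp only [hB_def]; nlinarith
  have hDpos : ∀ k : ℕ, 0 < D k := by
    intro k
    have : (0:ℤ) ≤ (k:ℤ) := Int.natCast_nonneg k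
    simp only [hD_def]; nlinarith
  have hAnd : ∀ k : ℕ, k < n → ¬ (p : ℤ) ∣ A k := by
    intro k hk hdvd
    have hkZ : (k : ℤ) < (n : ℤ) := by exact_mod_cast hk
    have hk0 : (0:ℤ) ≤ (k:ℤ) := Int.natCast_nonneg k
    have h1 : (p : ℤ) ∣ Q * (12 * (k : ℤ) + 1 - 6 * n) := by
      have he : Q * (12 * (k : ℤ) + 1 - 6 * n) = A k - 6 * (Q * n + P) := by
        simp only [hA_def]; ring
      rw [he, ← hpeq]
      exact dvd_sub hdvd (Dvd.dvd.mul_left dvd_rfl 6)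
    rcases hpZ.2.2 _ _ h1 with h | h
    · exact hpQ h
    · have := Int.eq_zero_of_abs_lt_dvd h (by rw [abs_lt]; constructor <;> omega)
      omega
  have hBnd : ∀ k : ℕ, k < n → ¬ (p : ℤ) ∣ B k := by
    intro k hk hdvd
    have hkZ : (k : ℤ) < (n : ℤ) := by exact_mod_cast hk
    have hk0 : (0:ℤ) ≤ (k:ℤ) := Int.natCast_nonneg k
    have h1 : (p : ℤ) ∣ Q * (12 * (k : ℤ) + 5 - 6 * n) := by
      have he : Q * (12 * (k : ℤ) + 5 - 6 * n) = B k - 6 * (Q * n + P) := by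
        simp only [hB_def]; ring
      rw [he, ← hpeq]
      exact dvd_sub hdvd (Dvd.dvd.mul_left dvd_rfl 6)
    rcases hpZ.2.2 _ _ h1 with h | h
    · exact hpQ h
    · have := Int.eq_zero_of_abs_lt_dvd h (by rw [abs_lt]; constructor <;> omega)
      omega
  have hDnd : ∀ k : ℕ, k < n - 1 → ¬ (p : ℤ) ∣ D k := by
    intro k hk hdvd
    have hkZ : (k : ℤ) < (n : ℤ) - 1 := by
      have : (k : ℤ) < ((n - 1 : ℕ) : ℤ) := by exact_mod_cast hk
      omega
    have hk0 : (0:ℤ) ≤ (k:ℤ) := Int.natCast_nonneg k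
    have hlt : D k < (p : ℤ) := by
      simp only [hD_def, hpeq]; nlinarith
    have := Int.le_of_dvd (hDpos k) hdvd
    omega
  have hDp : D (n - 1) = (p : ℤ) := by
    have : ((n - 1 : ℕ) : ℤ) = (n : ℤ) - 1 := by omega
    simp only [hD_def, this, hpeq]; ring
  have hEnd : ∀ k : ℕ, k < n → ¬ (p : ℤ) ∣ ((k : ℤ) + 1) := by
    intro k hk hdvd
    have hkZ : (k : ℤ) < (n : ℤ) := by exact_mod_cast hk
    have hk0 : (0:ℤ) ≤ (k:ℤ) := Int.natCast_nonneg k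
    have := Int.le_of_dvd (by omega) hdvd
    omega
  have h144 : ¬ (p : ℤ) ∣ 144 * Q := by
    intro hdvd
    rcases hpZ.2.2 _ _ hdvd with h | h
    · have : (144 : ℤ) = 2 ^ 4 * 3 ^ 2 := by norm_num
      rw [this] at h
      rcases hpZ.2.2 _ _ h with h | h
      · have := Int.le_of_dvd (by norm_num) (hpZ.dvd_of_dvd_pow h); omega
      · have := Int.le_of_dvd (by norm_num) (hpZ.dvd_of_dvd_pow h); omega
    · exact hpQ h
  -- rewrite terms as casts of integers
  have hterm : ∀ k ∈ Finset.range n,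
      ((12 * (Q : ℚ) * (k : ℚ) + (Q : ℚ) + 6 * (P : ℚ)) *
          (12 * (Q : ℚ) * (k : ℚ) + 5 * (Q : ℚ) + 6 * (P : ℚ))) /
        (((Q : ℚ) * (k : ℚ) + (Q : ℚ) + (P : ℚ)) * ((k : ℚ) + 1)) =
      (((A k : ℚ) * (B k : ℚ)) / ((D k : ℚ) * (((k : ℤ) + 1 : ℤ) : ℚ))) := by
    intro k _
    simp only [hA_def, hB_def, hD_def]
    push_cast
    ring
  rw [Finset.prod_congr rfl hterm]
  have hAne : ∀ k : ℕ, (A k : ℚ) ≠ 0 := fun k => by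
    exact_mod_cast (hApos k).ne'
  have hBne : ∀ k : ℕ, (B k : ℚ) ≠ 0 := fun k => by
    exact_mod_cast (hBpos k).ne'
  have hDne : ∀ k : ℕ, (D k : ℚ) ≠ 0 := fun k => by
    exact_mod_cast (hDpos k).ne'
  have hEne : ∀ k : ℕ, (((k : ℤ) + 1 : ℤ) : ℚ) ≠ 0 := fun k => by
    have : (0:ℤ) < (k:ℤ) + 1 := by have := Int.natCast_nonneg k; omega
    exact_mod_cast this.ne'
  have htne : ∀ k : ℕ, ((A k : ℚ) * (B k : ℚ)) / ((D k : ℚ) * (((k : ℤ) + 1 : ℤ) : ℚ)) ≠ 0 :=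
    fun k => div_ne_zero (mul_ne_zero (hAne k) (hBne k)) (mul_ne_zero (hDne k) (hEne k))
  have h144ne : (144 * (Q : ℚ))⁻¹ ≠ 0 := by
    have hQne : (Q : ℚ) ≠ 0 := by
      intro h; rw [Int.cast_eq_zero] at h; omega
    exact inv_ne_zero (by positivity)
  rw [padicValRat.mul (pow_ne_zero n h144ne)
      (Finset.prod_ne_zero_iff.2 fun k _ => htne k),
    padicValRat_finset_prod' _ _ fun k _ => htne k]
  have hval144 : padicValRat p (((144 * (Q : ℚ))⁻¹) ^ n) = 0 := by
    rw [padicValRat.pow _, padicValRat.inv]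
    have : (144 * (Q : ℚ)) = ((144 * Q : ℤ) : ℚ) := by push_cast; ring
    rw [this, padicValRat_int_eq_zero h144]
    ring
  rw [hval144, zero_add]
  have hvterm : ∀ k ∈ Finset.range n,
      padicValRat p (((A k : ℚ) * (B k : ℚ)) / ((D k : ℚ) * (((k : ℤ) + 1 : ℤ) : ℚ))) =
        if k = n - 1 then -1 else 0 := by
    intro k hk
    rw [Finset.mem_range] at hk
    rw [padicValRat.div (mul_ne_zero (hAne k) (hBne k)) (mul_ne_zero (hDne k) (hEne k)),
      padicValRat.mul (hAne k) (hBne k), padicValRat.mul (hDne k) (hEne k),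
      padicValRat_int_eq_zero (hAnd k hk), padicValRat_int_eq_zero (hBnd k hk),
      padicValRat_int_eq_zero (hEnd k hk)]
    by_cases hkn : k = n - 1
    · subst hkn
      rw [hDp]
      simp only [Int.cast_natCast]
      rw [padicValRat.self hp.one_lt]
      norm_num
    · rw [padicValRat_int_eq_zero (hDnd k (by omega)), if_neg hkn]
      ring
  rw [Finset.sum_congr rfl hvterm, Finset.sum_ite_eq' (Finset.range n) (n-1)
    (fun _ => (-1 : ℤ))]
  simp [Finset.mem_range]
  omega
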